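/- Let T be a nonnegative random variable, Z a random element of a measurable space E, W a random element of a measurable space F, and D a nonnegative random variable independent of (T, Z, W), with tail distribution function G(t) = P(D > t). Assume G(T) > 0 almost surely. Then the conditional expectation of 1{T < D} / G(T) given the σ-algebra generated by (T, Z, W) equals 1 almost surely. -/

import Mathlib

open MeasureTheory ProbabilityTheory Filter
open scoped Classical

/-- **IPCW identity.** Let `T` be a nonnegative random variable, `Z`, `W` random
elements of measurable spaces `E`, `F`, and `D` a nonnegative random variable
independent of `(T, Z, W)` with tail distribution function `G(t) = P(D > t)`.
If `G(T) > 0` a.s., then `E[1{T < D}/G(T) | σ(T, Z, W)] = 1` a.s. -/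
theorem stmt_5 {Ω : Type*} [MeasurableSpace Ω] (P : Measure Ω) [IsProbabilityMeasure P]
    {E F : Type*} [MeasurableSpace E] [MeasurableSpace F]
    (T : Ω → ℝ) (Z : Ω → E) (W : Ω → F) (D : Ω → ℝ)
    (hT : Measurable T) (hZ : Measurable Z) (hW : Measurable W) (hD : Measurable D)
    (hTnonneg : ∀ ω, 0 ≤ T ω) (hDnonneg : ∀ ω, 0 ≤ D ω)
    (hindep : IndepFun (fun ω => (T ω, Z ω, W ω)) D P)
    (G : ℝ → ℝ) (hGdef : ∀ t, G t = (P {ω | t < D ω}).toReal)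
    (hGpos : ∀ᵐ ω ∂P, 0 < G (T ω)) :
    P[(fun ω => (if T ω < D ω then (1 : ℝ) else 0) / G (T ω)) |
        MeasurableSpace.comap (fun ω => (T ω, Z ω, W ω)) inferInstance]
      =ᵐ[P] fun _ => 1 := by
  set X : Ω → ℝ × E × F := fun ω => (T ω, Z ω, W ω) with hX_def
  have hX : Measurable X := hT.prodMk (hZ.prodMk hW)
  set f : Ω → ℝ := fun ω => (if T ω < D ω then (1 : ℝ) else 0) / G (T ω) with hf_def
  -- G is antitone hence measurable
  have hGanti : Antitone G := by
    intro a b hab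
    rw [hGdef, hGdef]
    exact ENNReal.toReal_mono (measure_ne_top _ _)
      (measure_mono (fun ω h => lt_of_le_of_lt hab h))
  have hG : Measurable G := hGanti.measurable
  set ρ : Measure ℝ := Measure.map D P with hρ_def
  set ν : Measure (ℝ × E × F) := Measure.map X P with hν_def
  haveI : IsProbabilityMeasure ρ := Measure.isProbabilityMeasure_map hD.aemeasurable
  haveI : IsProbabilityMeasure ν := Measure.isProbabilityMeasure_map hX.aemeasurable
  have hρIoi : ∀ t, ρ (Set.Ioi t) = P {ω | t < D ω} := fun t =>
    Measure.map_apply hD measurableSet_Ioi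
  have hGofReal : ∀ t, ENNReal.ofReal (G t) = ρ (Set.Ioi t) := by
    intro t
    rw [hGdef, ← hρIoi, ENNReal.ofReal_toReal (measure_ne_top _ _)]
  -- joint law is product
  have hmap : Measure.map (fun ω => (X ω, D ω)) P = ν.prod ρ :=
    (indepFun_iff_map_prod_eq_prod_map_map hX.aemeasurable hD.aemeasurable).mp hindep
  -- the auxiliary ENNReal-valued function
  set H : (ℝ × E × F) × ℝ → ENNReal := fun p =>
    Set.indicator (Set.univ : Set (ℝ × E × F)) (fun _ => 1) p.1 *
      ((if p.1.1 < p.2 then 1 else 0) / ENNReal.ofReal (G p.1.1)) with hH_def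
  -- key computation
  have key : ∀ B : Set (ℝ × E × F), MeasurableSet B →
      ∫⁻ ω in X ⁻¹' B, ENNReal.ofReal (f ω) ∂P = P (X ⁻¹' B) := by
    intro B hB
    have hHB : Measurable (fun p : (ℝ × E × F) × ℝ =>
        Set.indicator B (fun _ => (1 : ENNReal)) p.1 *
          ((if p.1.1 < p.2 then 1 else 0) / ENNReal.ofReal (G p.1.1))) := by
      apply Measurable.mul
      · exact (measurable_const.indicator hB).comp measurable_fst
      · apply Measurable.div
        · exact Measurable.ite (measurableSet_lt (measurable_fst.fst) measurable_snd)
            measurable_const measurable_const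
        · exact (hG.comp measurable_fst.fst).ennreal_ofReal
    have step1 : ∫⁻ ω in X ⁻¹' B, ENNReal.ofReal (f ω) ∂P =
        ∫⁻ ω, Set.indicator B (fun _ => (1 : ENNReal)) (X ω) *
          ((if T ω < D ω then 1 else 0) / ENNReal.ofReal (G (T ω))) ∂P := by
      rw [← lintegral_indicator (hX hB)]
      apply lintegral_congr_ae
      filter_upwards [hGpos] with ω hω
      by_cases hmem : X ω ∈ B
      · simp only [Set.indicator_of_mem hmem, Set.indicator_of_mem (Set.mem_preimage.mpr hmem),
          one_mul, hf_def]
        rw [ENNReal.ofReal_div_of_pos hω]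
        congr 1
        split <;> simp
      · simp [Set.indicator_of_notMem hmem,
          Set.indicator_of_notMem (fun h => hmem (Set.mem_preimage.mp h))]
    rw [step1]
    have step2 : ∫⁻ ω, Set.indicator B (fun _ => (1 : ENNReal)) (X ω) *
          ((if T ω < D ω then 1 else 0) / ENNReal.ofReal (G (T ω))) ∂P =
        ∫⁻ p, Set.indicator B (fun _ => (1 : ENNReal)) p.1 *
          ((if p.1.1 < p.2 then 1 else 0) / ENNReal.ofReal (G p.1.1))
          ∂(Measure.map (fun ω => (X ω, D ω)) P) := by
      rw [lintegral_map hHB (hX.prodMk hD)]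
    rw [step2, hmap, lintegral_prod _ hHB.aemeasurable]
    have inner : ∀ x : ℝ × E × F,
        ∫⁻ d, Set.indicator B (fun _ => (1 : ENNReal)) x *
          ((if x.1 < d then 1 else 0) / ENNReal.ofReal (G x.1)) ∂ρ =
        Set.indicator B (fun _ => (1 : ENNReal)) x *
          (ρ (Set.Ioi x.1) / ENNReal.ofReal (G x.1)) := by
      intro x
      rw [lintegral_const_mul _ (by
        apply Measurable.div
        · exact Measurable.ite measurableSet_Ioi measurable_const measurable_const
        · exact measurable_const)]
      congr 1
      simp_rw [div_eq_mul_inv]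
      rw [lintegral_mul_const _
        (Measurable.ite measurableSet_Ioi measurable_const measurable_const)]
      congr 1
      have : (fun d => if x.1 < d then (1 : ENNReal) else 0) =
          Set.indicator (Set.Ioi x.1) (fun _ => 1) := by
        ext d
        by_cases h : x.1 < d
        · simp [h, Set.indicator_of_mem (Set.mem_Ioi.mpr h)]
        · simp [h, Set.indicator_of_notMem (fun hh => h (Set.mem_Ioi.mp hh))]
      rw [this, lintegral_indicator measurableSet_Ioi, setLIntegral_one]
    simp_rw [inner]
    have hae : ∀ᵐ x ∂ν, 0 < G x.1 := by
      have hms : MeasurableSet {x : ℝ × E × F | 0 < G x.1} :=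
        measurableSet_lt measurable_const (hG.comp measurable_fst)
      exact (ae_map_iff hX.aemeasurable hms).mpr hGpos
    have : ∫⁻ x, Set.indicator B (fun _ => (1 : ENNReal)) x *
        (ρ (Set.Ioi x.1) / ENNReal.ofReal (G x.1)) ∂ν =
        ∫⁻ x, Set.indicator B (fun _ => (1 : ENNReal)) x ∂ν := by
      apply lintegral_congr_ae
      filter_upwards [hae] with x hx
      rw [hGofReal, ENNReal.div_self (by
          rw [← hGofReal]
          simpa using ENNReal.ofReal_pos.mpr hx |>.ne') (measure_ne_top _ _), mul_one]
    rw [this, lintegral_indicator hB, setLIntegral_one, hν_def, Measure.map_apply hX hB]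
  -- nonnegativity of f a.e.
  have hf_nonneg : ∀ᵐ ω ∂P, 0 ≤ f ω := by
    filter_upwards [hGpos] with ω hω
    exact div_nonneg (by split <;> norm_num) hω.le
  -- measurability of f
  have hf_meas : Measurable f :=
    (Measurable.ite (measurableSet_lt hT hD) measurable_const measurable_const).div
      (hG.comp hT)
  -- integrability of f
  have hf_int : Integrable f P := by
    refine ⟨hf_meas.aestronglyMeasurable, ?_⟩
    rw [hasFiniteIntegral_iff_norm]
    have : ∫⁻ ω, ENNReal.ofReal ‖f ω‖ ∂P = ∫⁻ ω, ENNReal.ofReal (f ω) ∂P := by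
      apply lintegral_congr_ae
      filter_upwards [hf_nonneg] with ω hω
      rw [Real.norm_of_nonneg hω]
    rw [this]
    have := key Set.univ MeasurableSet.univ
    rw [Set.preimage_univ, Measure.restrict_univ] at this
    rw [this]
    exact measure_lt_top _ _
  have hm : MeasurableSpace.comap X inferInstance ≤ ‹MeasurableSpace Ω› := hX.comap_le
  haveI : SigmaFinite (P.trim hm) := by infer_instance
  refine (ae_eq_condExp_of_forall_setIntegral_eq hm hf_int
    (fun s _ _ => (integrable_const 1).integrableOn) ?_
    stronglyMeasurable_const.aestronglyMeasurable).symm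
  rintro s ⟨B, hB, rfl⟩ -
  rw [setIntegral_const]
  have h1 : ∫ ω in X ⁻¹' B, f ω ∂P =
      (∫⁻ ω in X ⁻¹' B, ENNReal.ofReal (f ω) ∂P).toReal := by
    rw [integral_eq_lintegral_of_nonneg_ae (ae_restrict_of_ae hf_nonneg)
      (hf_meas.aestronglyMeasurable.restrict)]
  rw [h1, key B hB]
  simp [Measure.real]
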